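/- Let U : S(ℝⁿ) → S(ℝⁿ) be a bijection satisfying, for all f, g ∈ S(ℝⁿ): (1) U(f + ḡ) = U(f) + conj(U(g)), (2) U(f·g) = U(f)·U(g), (3) U(f ∗ g) = U(f) ∗ U(g). If A : ℝⁿ → ℝⁿ is a homeomorphism such that A(supp f) = supp Uf for every f ∈ S(ℝⁿ), then A is additive: A(x + y) = A(x) + A(y) for all x, y ∈ ℝⁿ. -/

import Mathlib

open MeasureTheory SchwartzMap Complex Metric Set Function Pointwise

private lemma exists_schwartz_of_compact {n : ℕ} (f : EuclideanSpace ℝ (Fin n) → ℂ)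
    (hf : ContDiff ℝ ((⊤ : ℕ∞) : WithTop ℕ∞) f) (hsupp : HasCompactSupport f) :
    ∃ F : SchwartzMap (EuclideanSpace ℝ (Fin n)) ℂ, ⇑F = f := by
  refine ⟨⟨f, hf, ?_⟩, rfl⟩
  intro k m
  have hcont : Continuous fun z => ‖z‖ ^ k * ‖iteratedFDeriv ℝ m f z‖ :=
    (continuous_norm.pow k).mul (hf.continuous_iteratedFDeriv (by exact_mod_cast le_top)).norm
  have hcs : HasCompactSupport fun z => ‖z‖ ^ k * ‖iteratedFDeriv ℝ m f z‖ :=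
    ((hsupp.iteratedFDeriv m).norm).mul_left
  obtain ⟨C, hC⟩ := hcont.bounded_above_of_compact_support hcs
  exact ⟨C, fun z => (le_abs_self _).trans ((Real.norm_eq_abs _ ▸ hC z))⟩

theorem stmt_8 (n : ℕ)
    (U : SchwartzMap (EuclideanSpace ℝ (Fin n)) ℂ → SchwartzMap (EuclideanSpace ℝ (Fin n)) ℂ)
    (hUbij : Function.Bijective U)
    (h1 : ∀ f g h : SchwartzMap (EuclideanSpace ℝ (Fin n)) ℂ,
      (∀ x, h x = f x + starRingEnd ℂ (g x)) →
      ∀ x, U h x = U f x + starRingEnd ℂ (U g x))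
    (h2 : ∀ f g h : SchwartzMap (EuclideanSpace ℝ (Fin n)) ℂ,
      (∀ x, h x = f x * g x) → ∀ x, U h x = U f x * U g x)
    (h3 : ∀ f g h : SchwartzMap (EuclideanSpace ℝ (Fin n)) ℂ,
      (∀ x, h x = ∫ y, f (x - y) * g y) →
      ∀ x, U h x = ∫ y, U f (x - y) * U g y)
    (A : EuclideanSpace ℝ (Fin n) ≃ₜ EuclideanSpace ℝ (Fin n))
    (hA : ∀ f : SchwartzMap (EuclideanSpace ℝ (Fin n)) ℂ,
      ⇑A '' tsupport ⇑f = tsupport ⇑(U f)) :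
    ∀ x y : EuclideanSpace ℝ (Fin n), A (x + y) = A x + A y := by
  intro x y
  apply eq_of_forall_dist_le
  intro ε hε
  obtain ⟨δ₁, hδ₁pos, hδ₁⟩ := Metric.continuousAt_iff.mp (A.continuous.continuousAt (x := x))
    (ε / 3) (by positivity)
  obtain ⟨δ₂, hδ₂pos, hδ₂⟩ := Metric.continuousAt_iff.mp (A.continuous.continuousAt (x := y))
    (ε / 3) (by positivity)
  set δ : ℝ := min δ₁ δ₂ / 2 with hδdef
  have hδpos : 0 < δ := by positivity
  have hδ1 : δ < δ₁ := by
    have := min_le_left δ₁ δ₂; simp only [hδdef]; linarith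
  have hδ2 : δ < δ₂ := by
    have := min_le_right δ₁ δ₂; simp only [hδdef]; linarith
  set φ : ContDiffBump x := ⟨δ / 2, δ, by positivity, by linarith⟩ with hφdef
  set ψ : ContDiffBump y := ⟨δ / 2, δ, by positivity, by linarith⟩ with hψdef
  set f : EuclideanSpace ℝ (Fin n) → ℂ := fun z => ((φ z : ℝ) : ℂ) with hfdef
  set g : EuclideanSpace ℝ (Fin n) → ℂ := fun z => ((ψ z : ℝ) : ℂ) with hgdef
  have hfsmooth : ContDiff ℝ ((⊤ : ℕ∞) : WithTop ℕ∞) f := Complex.ofRealCLM.contDiff.comp φ.contDiff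
  have hgsmooth : ContDiff ℝ ((⊤ : ℕ∞) : WithTop ℕ∞) g := Complex.ofRealCLM.contDiff.comp ψ.contDiff
  have hfcs : HasCompactSupport f :=
    φ.hasCompactSupport.comp_left (g := fun r : ℝ => (r : ℂ)) Complex.ofReal_zero
  have hgcs : HasCompactSupport g :=
    ψ.hasCompactSupport.comp_left (g := fun r : ℝ => (r : ℂ)) Complex.ofReal_zero
  obtain ⟨F, hF⟩ := exists_schwartz_of_compact f hfsmooth hfcs
  obtain ⟨G, hG⟩ := exists_schwartz_of_compact g hgsmooth hgcs
  -- the convolution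
  set c : EuclideanSpace ℝ (Fin n) → ℂ :=
    convolution f g (ContinuousLinearMap.mul ℝ ℂ) volume with hcdef
  have hcsmooth : ContDiff ℝ ((⊤ : ℕ∞) : WithTop ℕ∞) c :=
    hgcs.contDiff_convolution_right _ (hfsmooth.continuous.locallyIntegrable) hgsmooth
  have hccs : HasCompactSupport c := hfcs.convolution _ hgcs
  obtain ⟨H, hH⟩ := exists_schwartz_of_compact c hcsmooth hccs
  have hconv : ∀ z, H z = ∫ u, F (z - u) * G u := by
    intro z
    rw [hH, hF, hG, hcdef]
    rw [convolution_eq_swap]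
    simp [ContinuousLinearMap.mul_apply']
  -- x + y is in the support of H
  have hxy : x + y ∈ tsupport ⇑H := by
    apply subset_tsupport
    have : H (x + y) = ((∫ u, φ (x + y - u) * ψ u : ℝ) : ℂ) := by
      rw [hconv]
      rw [show (fun u => F (x + y - u) * G u)
          = fun u => ((φ (x + y - u) * ψ u : ℝ) : ℂ) from by
        funext u; rw [hF, hG]; push_cast; rfl]
      exact integral_ofReal
    have hpos : 0 < ∫ u, φ (x + y - u) * ψ u := by
      have hnn : ∀ u, 0 ≤ φ (x + y - u) * ψ u := fun u => mul_nonneg φ.nonneg ψ.nonneg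
      have hcont : Continuous fun u => φ (x + y - u) * ψ u :=
        (φ.continuous.comp (continuous_const.sub continuous_id)).mul ψ.continuous
      have hsupp : HasCompactSupport fun u => φ (x + y - u) * ψ u :=
        ψ.hasCompactSupport.mul_left
      have hint : Integrable fun u => φ (x + y - u) * ψ u :=
        hcont.integrable_of_hasCompactSupport hsupp
      rw [integral_pos_iff_support_of_nonneg hnn hint]
      have hopen : IsOpen (Function.support fun u => φ (x + y - u) * ψ u) :=
        hcont.isOpen_support
      have hmem : y ∈ Function.support fun u => φ (x + y - u) * ψ u := by
        simp only [Function.mem_support]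
        have h1 : 0 < φ (x + y - y) := by
          rw [add_sub_cancel_right]
          exact φ.pos_of_mem_ball (mem_ball_self hδpos)
        have h2 : 0 < ψ y := ψ.pos_of_mem_ball (mem_ball_self hδpos)
        positivity
      exact hopen.measure_pos volume ⟨y, hmem⟩
    rw [Function.mem_support, this]
    exact_mod_cast hpos.ne'
  have hAxy : A (x + y) ∈ tsupport ⇑(U H) := by
    rw [← hA H]
    exact mem_image_of_mem _ hxy
  -- tsupport (U H) ⊆ closure (tsupport (U F) + tsupport (U G))
  set S : Set (EuclideanSpace ℝ (Fin n)) := tsupport ⇑(U F) + tsupport ⇑(U G) with hSdef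
  have hUHsub : tsupport ⇑(U H) ⊆ closure S := by
    have hzero : ∀ z, z ∉ closure S → U H z = 0 := by
      intro z hz
      rw [h3 F G H hconv z]
      have hall : ∀ u, U F (z - u) * U G u = 0 := by
        intro u
        by_contra hne
        obtain ⟨hne1, hne2⟩ := mul_ne_zero_iff.mp hne
        have h1 : z - u ∈ tsupport ⇑(U F) := subset_tsupport _ hne1
        have h2 : u ∈ tsupport ⇑(U G) := subset_tsupport _ hne2
        have hmem : z - u + u ∈ S := Set.add_mem_add h1 h2
        rw [sub_add_cancel] at hmem
        exact hz (subset_closure hmem)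
      simp only [hall, integral_zero]
    apply closure_minimal _ isClosed_closure
    intro z hz
    by_contra hzc
    exact hz (hzero z hzc)
  -- S is contained in a small closed ball
  have hFsub : tsupport ⇑F ⊆ closedBall x δ := by
    rw [hF]
    refine (closure_minimal ?_ isClosed_closedBall : tsupport f ⊆ _)
    intro z hz
    have : φ z ≠ 0 := by
      simp only [hfdef, Function.mem_support, ne_eq, Complex.ofReal_eq_zero] at hz
      exact hz
    have : z ∈ Metric.ball x δ := by rw [← φ.support_eq]; exact this
    exact ball_subset_closedBall this
  have hGsub : tsupport ⇑G ⊆ closedBall y δ := by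
    rw [hG]
    refine (closure_minimal ?_ isClosed_closedBall : tsupport g ⊆ _)
    intro z hz
    have : ψ z ≠ 0 := by
      simp only [hgdef, Function.mem_support, ne_eq, Complex.ofReal_eq_zero] at hz
      exact hz
    have : z ∈ Metric.ball y δ := by rw [← ψ.support_eq]; exact this
    exact ball_subset_closedBall this
  have hScb : S ⊆ closedBall (A x + A y) (2 * (ε / 3)) := by
    rintro s hs
    rw [Set.mem_add] at hs
    obtain ⟨a, ha, b, hb, rfl⟩ := hs
    rw [← hA F] at ha
    rw [← hA G] at hb
    obtain ⟨w, hw, rfl⟩ := ha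
    obtain ⟨v, hv, rfl⟩ := hb
    have hwx : dist (A w) (A x) < ε / 3 := by
      apply hδ₁
      have := hFsub hw
      rw [mem_closedBall] at this
      linarith
    have hvy : dist (A v) (A y) < ε / 3 := by
      apply hδ₂
      have := hGsub hv
      rw [mem_closedBall] at this
      linarith
    rw [mem_closedBall]
    calc dist (A w + A v) (A x + A y) ≤ dist (A w) (A x) + dist (A v) (A y) :=
          dist_add_add_le _ _ _ _
      _ ≤ 2 * (ε / 3) := by linarith
  have : A (x + y) ∈ closedBall (A x + A y) (2 * (ε / 3)) :=
    (closure_minimal hScb isClosed_closedBall) (hUHsub hAxy)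
  rw [mem_closedBall] at this
  linarith
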